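/- Let n ≥ 1 and let A, B be n×n complex matrices. Then the function s ↦ exp(A + s•B) (matrix exponential, s ∈ ℝ) has derivative at s = 0 equal to the Bochner integral ∫_{u∈[0,1]} exp((1−u)•A) * B * exp(u•A) du (Duhamel's formula for the derivative of the matrix exponential). -/

import Mathlib

open MeasureTheory

attribute [local instance] Matrix.linftyOpNormedAddCommGroup Matrix.linftyOpNormedSpace
  Matrix.linftyOpNormedRing Matrix.linftyOpNormedAlgebra

namespace DuhamelAux

variable {n : ℕ}

local notation "Mat" => Matrix (Fin n) (Fin n) ℂ

/-- Derivative of `u ↦ exp (u • M)` with respect to a real parameter. -/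
theorem hasDerivAt_exp_smul (M : Mat) (t : ℝ) :
    HasDerivAt (fun u : ℝ => NormedSpace.exp (u • M))
      (M * NormedSpace.exp (t • M)) t := by
  exact hasDerivAt_exp_smul_const' M t

/-- Derivative of `u ↦ exp ((1 - u) • M)`. -/
theorem hasDerivAt_exp_one_sub_smul (M : Mat) (t : ℝ) :
    HasDerivAt (fun u : ℝ => NormedSpace.exp ((1 - u) • M))
      (-(M * NormedSpace.exp ((1 - t) • M))) t := by
  have h1 : HasDerivAt (fun u : ℝ => 1 - u) (-1) t := by
    simpa using (hasDerivAt_id t).const_sub 1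
  have := (hasDerivAt_exp_smul M (1 - t)).scomp t h1
  simp only [neg_smul, one_smul] at this
  exact this

theorem commute_exp_smul (M : Mat) (t : ℝ) :
    M * NormedSpace.exp (t • M) = NormedSpace.exp (t • M) * M :=
  (((Commute.refl M).smul_right t).exp_right).eq

/-- The integrand is jointly continuous. -/
theorem continuous_integrand (A B : Mat) :
    Continuous (fun p : ℝ × ℝ =>
      NormedSpace.exp ((1 - p.2) • (A + p.1 • B)) * B * NormedSpace.exp (p.2 • A)) := by
  apply Continuous.mul
  · apply Continuous.mul _ continuous_const
    exact NormedSpace.exp_continuous.comp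
      (((continuous_const.sub continuous_snd)).smul
        (continuous_const.add (continuous_fst.smul continuous_const)))
  · exact NormedSpace.exp_continuous.comp (continuous_snd.smul continuous_const)

/-- Duhamel integral identity. -/
theorem key (A B : Mat) (s : ℝ) :
    NormedSpace.exp (A + s • B) - NormedSpace.exp A =
      s • ∫ u in (0:ℝ)..1,
        NormedSpace.exp ((1 - u) • (A + s • B)) * B * NormedSpace.exp (u • A) := by
  set C : Mat := A + s • B with hC
  have hg : ∀ u ∈ Set.uIcc (0:ℝ) 1,
      HasDerivAt (fun u : ℝ => NormedSpace.exp ((1 - u) • C) * NormedSpace.exp (u • A))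
        (-(s • (NormedSpace.exp ((1 - u) • C) * B * NormedSpace.exp (u • A)))) u := by
    intro u _
    have h1 := (hasDerivAt_exp_one_sub_smul C u).mul (hasDerivAt_exp_smul A u)
    refine h1.congr_deriv (Eq.symm ?_)
    rw [neg_mul, commute_exp_smul C (1 - u)]
    set P := NormedSpace.exp ((1 - u) • C)
    set Q := NormedSpace.exp (u • A)
    rw [hC]
    simp only [mul_add, add_mul, mul_smul_comm, smul_mul_assoc, mul_assoc, smul_add,
      neg_add, smul_smul]
    abel
  have hint : @IntervalIntegrable Mat (PseudoMetricSpace.toUniformSpace (α := Mat)).toTopologicalSpace _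
      (fun u : ℝ => -(s • (NormedSpace.exp ((1 - u) • C) * B * NormedSpace.exp (u • A))))
      volume 0 1 := by
    apply Continuous.intervalIntegrable
    exact (((continuous_integrand A B).comp
      (continuous_const.prodMk continuous_id)).const_smul s).neg
  have heq := intervalIntegral.integral_eq_sub_of_hasDerivAt hg hint
  rw [intervalIntegral.integral_neg, intervalIntegral.integral_smul] at heq
  norm_num [NormedSpace.exp_zero] at heq
  have := neg_eq_iff_eq_neg.mp heq
  rw [neg_sub] at this
  exact this.symm

end DuhamelAux

/-- **Duhamel's formula**: the derivative at `s = 0` of `s ↦ exp (A + s • B)` for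
`n × n` complex matrices is `∫_{u ∈ [0,1]} exp ((1-u) • A) * B * exp (u • A) du`. -/
theorem duhamel_deriv_matrix_exp (n : ℕ) (hn : 1 ≤ n)
    (A B : Matrix (Fin n) (Fin n) ℂ) :
    HasDerivAt (fun s : ℝ => NormedSpace.exp (A + s • B))
      (∫ u in Set.Icc (0 : ℝ) 1,
        NormedSpace.exp ((1 - u) • A) * B * NormedSpace.exp (u • A)) 0 := by
  set F : ℝ → Matrix (Fin n) (Fin n) ℂ := fun s =>
    ∫ u in (0:ℝ)..1,
      NormedSpace.exp ((1 - u) • (A + s • B)) * B * NormedSpace.exp (u • A) with hF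
  have hu : Continuous (Function.uncurry fun (s u : ℝ) =>
      NormedSpace.exp ((1 - u) • (A + s • B)) * B * NormedSpace.exp (u • A)) :=
    DuhamelAux.continuous_integrand A B
  have hFcont : Continuous F :=
    intervalIntegral.continuous_parametric_intervalIntegral_of_continuous' hu 0 1
  have hval : (∫ u in Set.Icc (0 : ℝ) 1,
      NormedSpace.exp ((1 - u) • A) * B * NormedSpace.exp (u • A)) = F 0 := by
    rw [hF]
    simp only [zero_smul, add_zero]
    rw [integral_Icc_eq_integral_Ioc, ← intervalIntegral.integral_of_le zero_le_one]
  rw [hval]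
  refine hasDerivAt_iff_tendsto_slope.mpr ?_
  apply Filter.Tendsto.congr' _ ((hFcont.tendsto 0).mono_left nhdsWithin_le_nhds)
  filter_upwards [self_mem_nhdsWithin] with s hs
  have hs' : s ≠ 0 := hs
  rw [slope_def_module]
  simp only [zero_smul, add_zero, sub_zero]
  rw [DuhamelAux.key A B s, smul_smul, inv_mul_cancel₀ hs', one_smul]
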